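/- If A is a Hilbert–Schmidt operator on a complex separable Hilbert space, then (1+A)e^{-A} − 1 is a trace-class operator. -/

import Mathlib

open scoped InnerProductSpace ComplexConjugate

noncomputable section

/-- The absolute value `|A| = √(A*A)` of a bounded operator on a complex Hilbert space. -/
noncomputable def absCLM {H : Type} [NormedAddCommGroup H] [InnerProductSpace ℂ H]
    [CompleteSpace H] (A : H →L[ℂ] H) : H →L[ℂ] H :=
  CFC.sqrt (ContinuousLinearMap.adjoint A * A)

/-- The trace of an operator computed along a Hilbert basis. -/
noncomputable def traceAlong {H : Type} [NormedAddCommGroup H] [InnerProductSpace ℂ H]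
    [CompleteSpace H] {ι : Type} (b : HilbertBasis ι ℂ H) (A : H →L[ℂ] H) : ℂ :=
  ∑' i, ⟪b i, A (b i)⟫_ℂ

/-- `A` is trace class: `Tr |A| < ∞` along the Hilbert basis `b`. -/
def IsTraceClassAlong {H : Type} [NormedAddCommGroup H] [InnerProductSpace ℂ H]
    [CompleteSpace H] {ι : Type} (b : HilbertBasis ι ℂ H) (A : H →L[ℂ] H) : Prop :=
  Summable fun i => (⟪b i, absCLM A (b i)⟫_ℂ).re

/-- The trace norm `‖A‖₁ = Tr |A|` along the Hilbert basis `b`. -/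
noncomputable def traceNormAlong {H : Type} [NormedAddCommGroup H] [InnerProductSpace ℂ H]
    [CompleteSpace H] {ι : Type} (b : HilbertBasis ι ℂ H) (A : H →L[ℂ] H) : ℝ :=
  ∑' i, (⟪b i, absCLM A (b i)⟫_ℂ).re

/-- `A` is a Hilbert–Schmidt operator (along the Hilbert basis `b`). -/
def IsHSAlong {H : Type} [NormedAddCommGroup H] [InnerProductSpace ℂ H]
    [CompleteSpace H] {ι : Type} (b : HilbertBasis ι ℂ H) (A : H →L[ℂ] H) : Prop :=
  Summable fun i => ‖A (b i)‖ ^ 2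

/-- The Hilbert–Schmidt norm `‖A‖₂` along the Hilbert basis `b`. -/
noncomputable def hsNormAlong {H : Type} [NormedAddCommGroup H] [InnerProductSpace ℂ H]
    [CompleteSpace H] {ι : Type} (b : HilbertBasis ι ℂ H) (A : H →L[ℂ] H) : ℝ :=
  Real.sqrt (∑' i, ‖A (b i)‖ ^ 2)

/-- `Cₙ(A) = (1/n!) Σ_{ξ∈Sₙ} sign ξ · Π_{η ∈ Cycle(ξ)} tr(A^{|η|})`, where `trA` is used
for the trace of `A` itself (cycles of length one) and traces of higher powers are
computed along the Hilbert basis `b`. -/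
noncomputable def cycleSum {H : Type} [NormedAddCommGroup H] [InnerProductSpace ℂ H]
    [CompleteSpace H] {ι : Type} (b : HilbertBasis ι ℂ H) (trA : ℂ) (A : H →L[ℂ] H)
    (n : ℕ) : ℂ :=
  ((Nat.factorial n : ℂ))⁻¹ * ∑ ξ : Equiv.Perm (Fin n),
    ((Equiv.Perm.sign ξ : ℤ) : ℂ) * trA ^ (n - ξ.support.card) *
      ∏ η ∈ ξ.cycleFactorsFinset, traceAlong b (A ^ η.support.card)

/-- The extended Fredholm determinant `Det(1+A)` for `A ∈ L_{1|2}(H)`, with respect to the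
splitting given by the projections `P₁, P₂`: `Det(1+A) = 1 + Σ_{n≥1} Cₙ(A)`, where in `Cₙ(A)`
the trace of `A` is taken to be `Tr(A_even)`. -/
noncomputable def fredholmDetExt {H : Type} [NormedAddCommGroup H] [InnerProductSpace ℂ H]
    [CompleteSpace H] {ι : Type} (b : HilbertBasis ι ℂ H) (P₁ P₂ : H →L[ℂ] H)
    (A : H →L[ℂ] H) : ℂ :=
  1 + ∑' n : ℕ, cycleSum b (traceAlong b (P₁ * A * P₁ + P₂ * A * P₂)) A (n + 1)

/-- The classical Fredholm determinant `Det(1+A)` of a trace class operator `A`. -/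
noncomputable def fredholmDetCl {H : Type} [NormedAddCommGroup H] [InnerProductSpace ℂ H]
    [CompleteSpace H] {ι : Type} (b : HilbertBasis ι ℂ H) (A : H →L[ℂ] H) : ℂ :=
  1 + ∑' n : ℕ, cycleSum b (traceAlong b A) A (n + 1)

end
section proofs

open ContinuousLinearMap

variable {H : Type} [NormedAddCommGroup H] [InnerProductSpace ℂ H] [CompleteSpace H]

private lemma real_le_of_forall_pos_le_add {a M : ℝ} (h : ∀ δ : ℝ, 0 < δ → a ≤ M + δ) :
    a ≤ M := by
  by_contra hc
  push_neg at hc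
  have := h ((a - M) / 2) (by linarith)
  linarith

private lemma absCLM_eq_cfc (B : H →L[ℂ] H) :
    absCLM B = cfc Real.sqrt (adjoint B * B) := by
  have hP : (0 : H →L[ℂ] H) ≤ adjoint B * B := by
    rw [← star_eq_adjoint]; exact star_mul_self_nonneg B
  have hsa : IsSelfAdjoint (adjoint B * B) := .of_nonneg hP
  have hb : (0 : H →L[ℂ] H) ≤ cfc Real.sqrt (adjoint B * B) :=
    cfc_nonneg (fun x _ => Real.sqrt_nonneg x)
  refine CFC.sqrt_unique ?_ hb
  rw [← cfc_mul _ _ (adjoint B * B)]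
  calc cfc (fun x => Real.sqrt x * Real.sqrt x) (adjoint B * B)
      = cfc (id : ℝ → ℝ) (adjoint B * B) :=
        cfc_congr (fun x hx => Real.mul_self_sqrt (spectrum_nonneg_of_nonneg hP hx))
    _ = adjoint B * B := cfc_id ℝ (adjoint B * B) hsa

private lemma parseval_ofReal (b : HilbertBasis ℕ ℂ H) (x : H) :
    ∑' j, ENNReal.ofReal (‖⟪b j, x⟫_ℂ‖ ^ 2) = ENNReal.ofReal (‖x‖ ^ 2) := by
  have h := b.hasSum_inner_mul_inner x x
  have h2 : HasSum (fun j => ‖⟪b j, x⟫_ℂ‖ ^ 2) (‖x‖ ^ 2) := by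
    have h3 := h.mapL Complex.reCLM
    have h4 : ∀ j, Complex.reCLM (⟪x, b j⟫_ℂ * ⟪b j, x⟫_ℂ) = ‖⟪b j, x⟫_ℂ‖ ^ 2 := by
      intro j
      have e1 : ⟪x, b j⟫_ℂ = (starRingEnd ℂ) ⟪b j, x⟫_ℂ := (inner_conj_symm _ _).symm
      rw [Complex.reCLM_apply, e1, mul_comm, Complex.mul_conj, Complex.ofReal_re,
        Complex.normSq_eq_norm_sq]
    have h5 : Complex.reCLM ⟪x, x⟫_ℂ = ‖x‖ ^ 2 := by
      rw [Complex.reCLM_apply, ← RCLike.re_to_complex]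
      exact inner_self_eq_norm_sq (𝕜 := ℂ) x
    rw [h5] at h3
    rw [show (fun j => ‖⟪b j, x⟫_ℂ‖ ^ 2) = fun j => Complex.reCLM (⟪x, b j⟫_ℂ * ⟪b j, x⟫_ℂ)
      from funext fun j => (h4 j).symm]
    exact h3
  rw [← h2.tsum_eq, ENNReal.ofReal_tsum_of_nonneg (fun j => sq_nonneg _) h2.summable]

private lemma swap_sum (b : HilbertBasis ℕ ℂ H) (C : H →L[ℂ] H) :
    ∑' i, ENNReal.ofReal (‖C (b i)‖ ^ 2) = ∑' j, ENNReal.ofReal (‖adjoint C (b j)‖ ^ 2) := by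
  calc ∑' i, ENNReal.ofReal (‖C (b i)‖ ^ 2)
      = ∑' i, ∑' j, ENNReal.ofReal (‖⟪b j, C (b i)⟫_ℂ‖ ^ 2) := by
        refine tsum_congr fun i => ?_
        rw [parseval_ofReal]
    _ = ∑' j, ∑' i, ENNReal.ofReal (‖⟪b j, C (b i)⟫_ℂ‖ ^ 2) := ENNReal.tsum_comm
    _ = ∑' j, ENNReal.ofReal (‖adjoint C (b j)‖ ^ 2) := by
        refine tsum_congr fun j => ?_
        rw [← parseval_ofReal b (adjoint C (b j))]
        refine tsum_congr fun i => ?_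
        rw [← adjoint_inner_left, norm_inner_symm]

private lemma sqrt_diff_bound {ε x : ℝ} (hε : 0 < ε) (hx : 0 ≤ x) :
    |Real.sqrt x - (Real.sqrt (x + ε))⁻¹ * x| ≤ Real.sqrt ε := by
  have hxe : 0 < x + ε := by linarith
  have hs : 0 < Real.sqrt (x + ε) := Real.sqrt_pos.mpr hxe
  have hsx : Real.sqrt x * Real.sqrt x = x := Real.mul_self_sqrt hx
  have hsxe : Real.sqrt (x + ε) * Real.sqrt (x + ε) = x + ε := Real.mul_self_sqrt hxe.le
  have hse : Real.sqrt ε * Real.sqrt ε = ε := Real.mul_self_sqrt hε.le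
  have hmono : Real.sqrt x ≤ Real.sqrt (x + ε) := Real.sqrt_le_sqrt (by linarith)
  have hmono2 : Real.sqrt ε ≤ Real.sqrt (x + ε) := Real.sqrt_le_sqrt (by linarith)
  have hsqx : 0 ≤ Real.sqrt x := Real.sqrt_nonneg x
  have hsqe : 0 ≤ Real.sqrt ε := Real.sqrt_nonneg ε
  rw [abs_le]
  constructor
  · -- lower bound: the difference is nonneg, in fact
    have : (Real.sqrt (x + ε))⁻¹ * x ≤ Real.sqrt x := by
      rw [inv_mul_le_iff₀ hs]
      nlinarith
    nlinarith
  · -- upper bound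
    have key : Real.sqrt x - (Real.sqrt (x + ε))⁻¹ * x ≤ Real.sqrt ε := by
      rw [sub_le_iff_le_add, ← sub_le_iff_le_add']
      rw [le_inv_mul_iff₀ hs] at *
      nlinarith
    exact key

set_option maxHeartbeats 4000000 in
private lemma traceClass_of_mul (b : HilbertBasis ℕ ℂ H) (T S : H →L[ℂ] H)
    (hT : Summable fun i => ‖T (b i)‖ ^ 2) (hS : Summable fun i => ‖S (b i)‖ ^ 2) :
    IsTraceClassAlong b (T * S) := by
  show Summable fun i => (⟪b i, absCLM (T * S) (b i)⟫_ℂ).re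
  set B : H →L[ℂ] H := T * S with hBdef
  set P : H →L[ℂ] H := adjoint B * B with hPdef
  have hP : (0 : H →L[ℂ] H) ≤ P := by
    rw [hPdef, ← star_eq_adjoint]; exact star_mul_self_nonneg B
  have hsa : IsSelfAdjoint P := .of_nonneg hP
  have hspec : ∀ x ∈ spectrum ℝ P, 0 ≤ x := fun x hx => spectrum_nonneg_of_nonneg hP hx
  have habs : absCLM B = cfc Real.sqrt P := absCLM_eq_cfc B
  have hpos : (absCLM B).IsPositive := by
    rw [← nonneg_iff_isPositive]
    exact CFC.sqrt_nonneg (adjoint B * B)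
  have hnn : ∀ i, 0 ≤ (⟪b i, absCLM B (b i)⟫_ℂ).re := fun i =>
    (Complex.nonneg_iff.mp (hpos.inner_nonneg_right (b i))).1
  set tT : ℝ := ∑' i, ‖T (b i)‖ ^ 2 with htT
  set tS : ℝ := ∑' i, ‖S (b i)‖ ^ 2 with htS
  have htT0 : 0 ≤ tT := tsum_nonneg fun i => sq_nonneg _
  have htS0 : 0 ≤ tS := tsum_nonneg fun i => sq_nonneg _
  refine summable_of_sum_le (c := Real.sqrt tT * Real.sqrt tS) hnn fun F => ?_
  refine real_le_of_forall_pos_le_add fun δ hδ => ?_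
  set c : ℝ := (F.card : ℝ) + 1 with hc
  have hc0 : 0 < c := by positivity
  set ε : ℝ := (δ / c) ^ 2 with hε'
  have hε : 0 < ε := by positivity
  have hsqrtε : Real.sqrt ε = δ / c := by
    rw [hε', Real.sqrt_sq (by positivity)]
  -- the approximate polar isometry
  have hgcont : ContinuousOn (fun x : ℝ => (Real.sqrt (x + ε))⁻¹) (spectrum ℝ P) := by
    refine ContinuousOn.inv₀ ?_ ?_
    · exact (Real.continuous_sqrt.comp (continuous_id.add continuous_const)).continuousOn
    · intro x hx
      exact ne_of_gt (Real.sqrt_pos.mpr (by have := hspec x hx; linarith))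
  have hmulcont : ContinuousOn (fun x : ℝ => (Real.sqrt (x + ε))⁻¹ * x) (spectrum ℝ P) :=
    hgcont.mul continuousOn_id
  set g : H →L[ℂ] H := cfc (fun x : ℝ => (Real.sqrt (x + ε))⁻¹) P with hgdef
  set W : H →L[ℂ] H := B * g with hWdef
  have hgsa : IsSelfAdjoint g := cfc_predicate _ _
  have hWstar : adjoint W = g * adjoint B := by
    rw [← star_eq_adjoint, ← star_eq_adjoint, hWdef, star_mul, hgsa.star_eq]
  have hWB : adjoint W * B = cfc (fun x : ℝ => (Real.sqrt (x + ε))⁻¹ * x) P := by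
    rw [hWstar, mul_assoc, ← hPdef]
    calc g * P = cfc (fun x : ℝ => (Real.sqrt (x + ε))⁻¹) P * cfc (fun x : ℝ => x) P := by
          rw [cfc_id' ℝ P hsa]
      _ = cfc (fun x : ℝ => (Real.sqrt (x + ε))⁻¹ * x) P :=
          (cfc_mul (fun x : ℝ => (Real.sqrt (x + ε))⁻¹) (fun x : ℝ => x) P hgcont
            continuousOn_id).symm
  have happrox : ‖absCLM B - adjoint W * B‖ ≤ Real.sqrt ε := by
    rw [habs, hWB, ← cfc_sub Real.sqrt (fun x : ℝ => (Real.sqrt (x + ε))⁻¹ * x) P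
      Real.continuous_sqrt.continuousOn hmulcont]
    refine norm_cfc_le (Real.sqrt_nonneg ε) fun x hx => ?_
    rw [Real.norm_eq_abs]
    exact sqrt_diff_bound hε (hspec x hx)
  have hWW : adjoint W * W = cfc
      (fun x : ℝ => (Real.sqrt (x + ε))⁻¹ * x * (Real.sqrt (x + ε))⁻¹) P := by
    rw [hWdef, ← mul_assoc, hWB, hgdef,
      ← cfc_mul (fun x : ℝ => (Real.sqrt (x + ε))⁻¹ * x)
        (fun x : ℝ => (Real.sqrt (x + ε))⁻¹) P hmulcont hgcont]
  have hWWnorm : ‖adjoint W * W‖ ≤ 1 := by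
    rw [hWW]
    refine norm_cfc_le zero_le_one fun x hx => ?_
    have hx0 : 0 ≤ x := hspec x hx
    have hxe : 0 < x + ε := by linarith
    have hs : 0 < Real.sqrt (x + ε) := Real.sqrt_pos.mpr hxe
    have hsxe : Real.sqrt (x + ε) * Real.sqrt (x + ε) = x + ε := Real.mul_self_sqrt hxe.le
    rw [Real.norm_eq_abs, abs_of_nonneg (by positivity)]
    rw [mul_comm, ← mul_assoc, ← mul_inv, hsxe]
    rw [inv_mul_le_iff₀ hxe]
    linarith
  have hWle : ∀ x : H, ‖W x‖ ≤ ‖x‖ := by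
    intro x
    have h1 : (⟪x, (adjoint W * W) x⟫_ℂ) = ⟪W x, W x⟫_ℂ := by
      rw [ContinuousLinearMap.mul_apply]
      exact adjoint_inner_right W x (W x)
    have h2 : ‖W x‖ ^ 2 = (⟪x, (adjoint W * W) x⟫_ℂ).re := by
      rw [h1, ← inner_self_eq_norm_sq (𝕜 := ℂ) (W x)]
      rfl
    have h3 : (⟪x, (adjoint W * W) x⟫_ℂ).re ≤ ‖x‖ * ‖(adjoint W * W) x‖ := by
      calc (⟪x, (adjoint W * W) x⟫_ℂ).re ≤ ‖⟪x, (adjoint W * W) x⟫_ℂ‖ :=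
            Complex.re_le_norm _
        _ ≤ ‖x‖ * ‖(adjoint W * W) x‖ := norm_inner_le_norm _ _
    have h4 : ‖(adjoint W * W) x‖ ≤ ‖x‖ := by
      calc ‖(adjoint W * W) x‖ ≤ ‖adjoint W * W‖ * ‖x‖ := le_opNorm _ x
        _ ≤ 1 * ‖x‖ := by
            exact mul_le_mul_of_nonneg_right hWWnorm (norm_nonneg x)
        _ = ‖x‖ := one_mul _
    nlinarith [norm_nonneg (W x), norm_nonneg x]
  have hWadj : ∀ x : H, ‖adjoint W x‖ ≤ ‖x‖ := by
    have hWn : ‖W‖ ≤ 1 := opNorm_le_bound _ zero_le_one fun x => by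
      simpa using hWle x
    have : ‖adjoint W‖ ≤ 1 := by
      rw [show ‖adjoint W‖ = ‖W‖ from adjoint.norm_map W]
      exact hWn
    intro x
    calc ‖adjoint W x‖ ≤ ‖adjoint W‖ * ‖x‖ := le_opNorm _ x
      _ ≤ 1 * ‖x‖ := mul_le_mul_of_nonneg_right this (norm_nonneg x)
      _ = ‖x‖ := one_mul _
  -- the Hilbert–Schmidt control of D = T* W
  set D : H →L[ℂ] H := adjoint T * W with hDdef
  have hadjD : adjoint D = adjoint W * T := by
    rw [← star_eq_adjoint, ← star_eq_adjoint, hDdef, star_mul, star_eq_adjoint,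
      star_eq_adjoint, adjoint_adjoint]
  have hDpt : ∀ j, ‖adjoint D (b j)‖ ^ 2 ≤ ‖T (b j)‖ ^ 2 := by
    intro j
    have : ‖adjoint D (b j)‖ ≤ ‖T (b j)‖ := by
      rw [hadjD, ContinuousLinearMap.mul_apply]
      exact hWadj (T (b j))
    exact pow_le_pow_left₀ (norm_nonneg _) this 2
  have hDenn : ∑' i, ENNReal.ofReal (‖D (b i)‖ ^ 2) ≤ ENNReal.ofReal tT := by
    calc ∑' i, ENNReal.ofReal (‖D (b i)‖ ^ 2)
        = ∑' j, ENNReal.ofReal (‖adjoint D (b j)‖ ^ 2) := swap_sum b D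
      _ ≤ ∑' j, ENNReal.ofReal (‖T (b j)‖ ^ 2) :=
          ENNReal.tsum_le_tsum fun j => ENNReal.ofReal_le_ofReal (hDpt j)
      _ = ENNReal.ofReal tT := by
          rw [htT, ENNReal.ofReal_tsum_of_nonneg (fun j => sq_nonneg _) hT]
  have hDsummable : Summable fun i => ‖D (b i)‖ ^ 2 := by
    have hne : ∑' i, ENNReal.ofReal (‖D (b i)‖ ^ 2) ≠ ⊤ :=
      ne_top_of_le_ne_top ENNReal.ofReal_ne_top hDenn
    have := ENNReal.summable_toReal hne
    refine this.congr fun i => ?_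
    rw [ENNReal.toReal_ofReal (sq_nonneg _)]
  have hDtsum : ∑' i, ‖D (b i)‖ ^ 2 ≤ tT := by
    rw [← ENNReal.ofReal_le_ofReal_iff htT0,
      ENNReal.ofReal_tsum_of_nonneg (fun i => sq_nonneg _) hDsummable]
    exact hDenn
  clear_value B P g W D
  clear habs hWB hWW hWWnorm hgsa hWstar hgcont hmulcont hspec hsa hP hpos hadjD hDpt hDenn
  clear hPdef hgdef hWle hWadj hε'
  -- pointwise estimate
  have hpt : ∀ i, (⟪b i, absCLM B (b i)⟫_ℂ).re ≤
      ‖D (b i)‖ * ‖S (b i)‖ + Real.sqrt ε := by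
    intro i
    have hbi : ‖b i‖ = 1 := b.orthonormal.1 i
    have e1 : (⟪b i, absCLM B (b i)⟫_ℂ) =
        ⟪b i, (absCLM B - adjoint W * B) (b i)⟫_ℂ + ⟪b i, (adjoint W * B) (b i)⟫_ℂ := by
      have e0 : (absCLM B - adjoint W * B) (b i) + (adjoint W * B) (b i) = absCLM B (b i) := by
        rw [ContinuousLinearMap.sub_apply]; abel
      rw [← inner_add_right, e0]
    have e2 : (⟪b i, (absCLM B - adjoint W * B) (b i)⟫_ℂ).re ≤ Real.sqrt ε := by
      calc (⟪b i, (absCLM B - adjoint W * B) (b i)⟫_ℂ).re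
          ≤ ‖⟪b i, (absCLM B - adjoint W * B) (b i)⟫_ℂ‖ := Complex.re_le_norm _
        _ ≤ ‖b i‖ * ‖(absCLM B - adjoint W * B) (b i)‖ := norm_inner_le_norm _ _
        _ ≤ ‖b i‖ * (‖absCLM B - adjoint W * B‖ * ‖b i‖) :=
            mul_le_mul_of_nonneg_left (le_opNorm _ _) (norm_nonneg _)
        _ = ‖absCLM B - adjoint W * B‖ := by rw [hbi]; ring
        _ ≤ Real.sqrt ε := happrox
    have e3 : (⟪b i, (adjoint W * B) (b i)⟫_ℂ).re ≤ ‖D (b i)‖ * ‖S (b i)‖ := by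
      have e4 : (⟪b i, (adjoint W * B) (b i)⟫_ℂ) = ⟪D (b i), S (b i)⟫_ℂ := by
        rw [ContinuousLinearMap.mul_apply, adjoint_inner_right, hBdef, ContinuousLinearMap.mul_apply, hDdef, ContinuousLinearMap.mul_apply,
          adjoint_inner_left]
      calc (⟪b i, (adjoint W * B) (b i)⟫_ℂ).re ≤ ‖⟪b i, (adjoint W * B) (b i)⟫_ℂ‖ :=
            Complex.re_le_norm _
        _ = ‖⟪D (b i), S (b i)⟫_ℂ‖ := by rw [e4]
        _ ≤ ‖D (b i)‖ * ‖S (b i)‖ := norm_inner_le_norm _ _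
    calc (⟪b i, absCLM B (b i)⟫_ℂ).re
        = (⟪b i, (absCLM B - adjoint W * B) (b i)⟫_ℂ).re
          + (⟪b i, (adjoint W * B) (b i)⟫_ℂ).re := by rw [e1, Complex.add_re]
      _ ≤ ‖D (b i)‖ * ‖S (b i)‖ + Real.sqrt ε := by linarith
  -- summing up over F
  have hCS : ∑ i ∈ F, ‖D (b i)‖ * ‖S (b i)‖ ≤ Real.sqrt tT * Real.sqrt tS := by
    have hq : (∑ i ∈ F, ‖D (b i)‖ * ‖S (b i)‖) ^ 2 ≤ tT * tS := by
      calc (∑ i ∈ F, ‖D (b i)‖ * ‖S (b i)‖) ^ 2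
          ≤ (∑ i ∈ F, ‖D (b i)‖ ^ 2) * ∑ i ∈ F, ‖S (b i)‖ ^ 2 :=
            Finset.sum_mul_sq_le_sq_mul_sq F _ _
        _ ≤ tT * tS := by
            refine mul_le_mul ?_ ?_ (Finset.sum_nonneg fun i _ => sq_nonneg _) htT0
            · exact le_trans (Summable.sum_le_tsum F (fun i _ => sq_nonneg _) hDsummable) hDtsum
            · exact Summable.sum_le_tsum F (fun i _ => sq_nonneg _) hS
    calc ∑ i ∈ F, ‖D (b i)‖ * ‖S (b i)‖
        = Real.sqrt ((∑ i ∈ F, ‖D (b i)‖ * ‖S (b i)‖) ^ 2) :=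
          (Real.sqrt_sq (Finset.sum_nonneg fun i _ =>
            mul_nonneg (norm_nonneg _) (norm_nonneg _))).symm
      _ ≤ Real.sqrt (tT * tS) := Real.sqrt_le_sqrt hq
      _ = Real.sqrt tT * Real.sqrt tS := Real.sqrt_mul htT0 tS
  calc ∑ i ∈ F, (⟪b i, absCLM B (b i)⟫_ℂ).re
      ≤ ∑ i ∈ F, (‖D (b i)‖ * ‖S (b i)‖ + Real.sqrt ε) :=
        Finset.sum_le_sum fun i _ => hpt i
    _ = (∑ i ∈ F, ‖D (b i)‖ * ‖S (b i)‖) + F.card * Real.sqrt ε := by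
        rw [Finset.sum_add_distrib, Finset.sum_const, nsmul_eq_mul]
    _ ≤ Real.sqrt tT * Real.sqrt tS + δ := by
        have : (F.card : ℝ) * Real.sqrt ε ≤ δ := by
          rw [hsqrtε]
          rw [hc]
          rw [div_eq_mul_inv]
          have h1 : (F.card : ℝ) ≤ (F.card : ℝ) + 1 := by linarith
          calc (F.card : ℝ) * (δ * ((F.card : ℝ) + 1)⁻¹)
              ≤ ((F.card : ℝ) + 1) * (δ * ((F.card : ℝ) + 1)⁻¹) := by
                refine mul_le_mul_of_nonneg_right h1 (by positivity)
            _ = δ := by field_simp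
        linarith [hCS]



private lemma exp_factor (A : H →L[ℂ] H) :
    ∃ C : H →L[ℂ] H, (1 + A) * NormedSpace.exp (-A) - 1 = C * A * A := by
  set f : ℕ → (H →L[ℂ] H) := fun n => ((n.factorial : ℂ))⁻¹ • (-A) ^ n with hf
  have hexp : HasSum f (NormedSpace.exp (-A)) := NormedSpace.exp_series_hasSum_exp' (-A)
  set d : ℕ → ℂ := fun k =>
    (-1) ^ k * (((k + 2).factorial : ℂ)⁻¹ - ((k + 1).factorial : ℂ)⁻¹) with hd
  set g : ℕ → (H →L[ℂ] H) := fun k => d k • A ^ k with hg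
  have hfacinv : ∀ k m : ℕ, k ≤ m → ((m.factorial : ℝ))⁻¹ ≤ ((k.factorial : ℝ))⁻¹ := by
    intro k m hkm
    have h1 : (0 : ℝ) < k.factorial := by exact_mod_cast k.factorial_pos
    have h2 : (k.factorial : ℝ) ≤ m.factorial := by exact_mod_cast Nat.factorial_le hkm
    exact inv_anti₀ h1 h2
  have hdnorm : ∀ k, ‖d k‖ ≤ 2 / k.factorial := by
    intro k
    have e1 : ‖(-1 : ℂ) ^ k‖ = 1 := by simp
    have e2 : ‖(((k + 2).factorial : ℂ))⁻¹‖ = ((k + 2).factorial : ℝ)⁻¹ := by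
      rw [norm_inv]
      norm_num
    have e3 : ‖(((k + 1).factorial : ℂ))⁻¹‖ = ((k + 1).factorial : ℝ)⁻¹ := by
      rw [norm_inv]
      norm_num
    calc ‖d k‖ = ‖(((k + 2).factorial : ℂ)⁻¹ - ((k + 1).factorial : ℂ)⁻¹)‖ := by
          rw [hd, norm_mul, e1, one_mul]
      _ ≤ ‖(((k + 2).factorial : ℂ))⁻¹‖ + ‖(((k + 1).factorial : ℂ))⁻¹‖ := norm_sub_le _ _
      _ ≤ ((k.factorial : ℝ))⁻¹ + ((k.factorial : ℝ))⁻¹ := by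
          rw [e2, e3]
          have := hfacinv k (k + 2) (by omega)
          have := hfacinv k (k + 1) (by omega)
          gcongr <;> assumption
      _ = 2 / k.factorial := by rw [div_eq_mul_inv]; ring
  have hgsum : Summable g := by
    have hbase : Summable (fun k : ℕ => 2 / (k.factorial : ℝ) * ‖A‖ ^ k) := by
      have := (Real.summable_pow_div_factorial ‖A‖).mul_left 2
      refine this.congr fun k => ?_
      field_simp
    refine Summable.of_norm
      (Summable.of_nonneg_of_le (fun k => norm_nonneg _) (fun k => ?_) hbase)
    calc ‖g k‖ = ‖d k‖ * ‖A ^ k‖ := norm_smul _ _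
      _ ≤ (2 / k.factorial) * ‖A‖ ^ k := by
          have h1 : ‖A ^ k‖ ≤ ‖A‖ ^ k := by
            cases k with
            | zero =>
              simpa [ContinuousLinearMap.one_def] using
                (ContinuousLinearMap.norm_id_le : ‖ContinuousLinearMap.id ℂ H‖ ≤ 1)
            | succ n => exact norm_pow_le' A n.succ_pos
          have h2 := hdnorm k
          have h3 : (0:ℝ) ≤ ‖A‖ ^ k := by positivity
          have h4 : (0:ℝ) < (k.factorial : ℝ) := by exact_mod_cast k.factorial_pos
          nlinarith [norm_nonneg (A ^ k), norm_nonneg (d k)]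
  refine ⟨∑' k, g k, ?_⟩
  have hC : HasSum (fun k => g k * A * A) ((∑' k, g k) * A * A) :=
    (hgsum.hasSum.mul_right A).mul_right A
  have h2 : HasSum (fun k => f (k + 2)) (NormedSpace.exp (-A) - (f 0 + f 1)) := by
    have h := (hasSum_nat_add_iff' 2).mpr hexp
    simpa [Finset.sum_range_succ] using h
  have h1 : HasSum (fun k => f (k + 1)) (NormedSpace.exp (-A) - f 0) := by
    have h := (hasSum_nat_add_iff' 1).mpr hexp
    simpa using h
  have hm : HasSum (fun k => A * f (k + 1)) (A * (NormedSpace.exp (-A) - f 0)) :=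
    h1.mul_left A
  have hsum := h2.add hm
  have hA' : (-A) = (-1 : ℂ) • A := (neg_one_smul ℂ A).symm
  have hfun : ∀ k, f (k + 2) + A * f (k + 1) = g k * A * A := by
    intro k
    have e1 : f (k + 2) = ((((k + 2).factorial : ℂ))⁻¹ * (-1) ^ (k + 2)) • A ^ (k + 2) := by
      simp only [hf]
      rw [hA', smul_pow, smul_smul]
    have e2 : A * f (k + 1) =
        ((((k + 1).factorial : ℂ))⁻¹ * (-1) ^ (k + 1)) • A ^ (k + 2) := by
      simp only [hf]
      rw [hA', smul_pow, smul_smul, mul_smul_comm, ← pow_succ']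
    have e3 : g k * A * A = d k • A ^ (k + 2) := by
      simp only [hg]
      rw [smul_mul_assoc, smul_mul_assoc, ← pow_succ, ← pow_succ]
    rw [e1, e2, e3, ← add_smul]
    congr 1
    simp only [hd]
    ring
  have hf0 : f 0 = 1 := by simp [hf]
  have hf1 : f 1 = -A := by simp [hf]
  have hval : NormedSpace.exp (-A) - (f 0 + f 1) + A * (NormedSpace.exp (-A) - f 0)
      = (1 + A) * NormedSpace.exp (-A) - 1 := by
    rw [hf0, hf1]
    noncomm_ring
  rw [← hval]
  have hsum' := (funext hfun :
    (fun k => f (k + 2) + A * f (k + 1)) = fun k => g k * A * A) ▸ hsum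
  exact hsum'.unique hC


end proofs

/-- If `A` is a Hilbert–Schmidt operator on a complex separable Hilbert
space, then `(1+A)e^{-A} − 1` is a trace class operator. -/
theorem stmt_3 {H : Type}
    [NormedAddCommGroup H] [InnerProductSpace ℂ H] [CompleteSpace H]
    (b : HilbertBasis ℕ ℂ H) (A : H →L[ℂ] H) (hA : IsHSAlong b A) :
    IsTraceClassAlong b ((1 + A) * NormedSpace.exp (-A) - 1) := by
  obtain ⟨C, hC⟩ := exp_factor A
  rw [hC]
  have hA' : Summable fun i => ‖A (b i)‖ ^ 2 := hA
  have hCA : Summable fun i => ‖(C * A) (b i)‖ ^ 2 := by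
    refine Summable.of_nonneg_of_le (fun i => sq_nonneg _) (fun i => ?_)
      (hA'.mul_left (‖C‖ ^ 2))
    rw [ContinuousLinearMap.mul_apply]
    calc ‖C (A (b i))‖ ^ 2 ≤ (‖C‖ * ‖A (b i)‖) ^ 2 :=
          pow_le_pow_left₀ (norm_nonneg _) (C.le_opNorm (A (b i))) 2
      _ = ‖C‖ ^ 2 * ‖A (b i)‖ ^ 2 := mul_pow _ _ 2
  exact traceClass_of_mul b (C * A) A hCA hA'
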